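/- An approach space (X, δ) is probabilistic metrizable with respect to the product t-norm *_P if and only if it is probabilistic metrizable with respect to the Łukasiewicz t-norm *_Ł. -/

import Mathlib

open scoped ENNReal

/-- A distance distribution: a map `[0,∞] → [0,1]` with value `0` at `0`, `1` at `∞`,
monotone and left-continuous on `(0,∞)`. -/
structure IsDistanceDistribution (φ : ℝ≥0∞ → ℝ) : Prop where
  mem : ∀ t, φ t ∈ Set.Icc (0:ℝ) 1
  zero : φ 0 = 0
  top : φ ⊤ = 1
  mono : Monotone φ
  leftCont : ∀ t : ℝ≥0∞, 0 < t → t ≠ ⊤ → φ t = ⨆ s : {s : ℝ≥0∞ // s < t}, φ s.1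

/-- A continuous t-norm on the interval `[a,b] ⊆ ℝ`. -/
structure IsContinuousTNorm (a b : ℝ) (m : ℝ → ℝ → ℝ) : Prop where
  mem : ∀ ⦃p q : ℝ⦄, p ∈ Set.Icc a b → q ∈ Set.Icc a b → m p q ∈ Set.Icc a b
  comm : ∀ ⦃p q : ℝ⦄, p ∈ Set.Icc a b → q ∈ Set.Icc a b → m p q = m q p
  assoc : ∀ ⦃p q r : ℝ⦄, p ∈ Set.Icc a b → q ∈ Set.Icc a b → r ∈ Set.Icc a b →
    m (m p q) r = m p (m q r)
  unit : ∀ ⦃p : ℝ⦄, p ∈ Set.Icc a b → m p b = p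
  mono : ∀ ⦃p p' q q' : ℝ⦄, p ∈ Set.Icc a b → p' ∈ Set.Icc a b → q ∈ Set.Icc a b →
    q' ∈ Set.Icc a b → p ≤ p' → q ≤ q' → m p q ≤ m p' q'
  continuous : ContinuousOn (fun x : ℝ × ℝ => m x.1 x.2) (Set.Icc a b ×ˢ Set.Icc a b)

/-- `α` is a probabilistic metric on `X` with respect to the t-norm `m` on `[0,1]`. -/
structure IsProbMetric {X : Type*} (m : ℝ → ℝ → ℝ) (α : X → X → ℝ≥0∞ → ℝ) : Prop where
  dd : ∀ x y, IsDistanceDistribution (α x y)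
  refl : ∀ x (t : ℝ≥0∞), 0 < t → α x x t = 1
  symm : ∀ x y t, α x y t = α y x t
  sep : ∀ x y, (∀ t : ℝ≥0∞, 0 < t → α x y t = 1) → x = y
  triangle : ∀ x y z (r s : ℝ≥0∞), m (α y z r) (α x y s) ≤ α x z (r + s)

/-- The approach distance induced by a probabilistic metric:
`δ_α(x,A) = inf { r | sup_{a ∈ A} α(x,a,r) = 1 }`. -/
noncomputable def probDist {X : Type*} (α : X → X → ℝ≥0∞ → ℝ) (x : X) (A : Set X) : ℝ≥0∞ :=
  sInf {r : ℝ≥0∞ | sSup ((fun a => α x a r) '' A) = 1}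

/-- `δ` is an approach structure on `X`. -/
structure IsApproach {X : Type*} (δ : X → Set X → ℝ≥0∞) : Prop where
  point : ∀ x, δ x {x} = 0
  empty : ∀ x, δ x (∅ : Set X) = ⊤
  union : ∀ x A B, δ x (A ∪ B) = min (δ x A) (δ x B)
  triangle : ∀ x (A B : Set X), δ x A ≤ (⨆ b : B, δ b.1 A) + δ x B

/-- An approach structure is probabilistic metrizable w.r.t. the t-norm `m`. -/
def ProbMetrizable {X : Type*} (m : ℝ → ℝ → ℝ) (δ : X → Set X → ℝ≥0∞) : Prop :=
  ∃ α : X → X → ℝ≥0∞ → ℝ, IsProbMetric m α ∧ ∀ x A, δ x A = probDist α x A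

/-- The minimum t-norm. -/
def minT : ℝ → ℝ → ℝ := fun p q => min p q
/-- The product t-norm. -/
def prodT : ℝ → ℝ → ℝ := fun p q => p * q
/-- The Łukasiewicz t-norm. -/
def lukT : ℝ → ℝ → ℝ := fun p q => max 0 (p + q - 1)

/-- `q⁻`: the largest idempotent element of `m` in `[a, q]`. -/
noncomputable def idemBelow (a : ℝ) (m : ℝ → ℝ → ℝ) (q : ℝ) : ℝ :=
  sSup {p : ℝ | p ∈ Set.Icc a q ∧ m p p = p}

section Aux

open Real

/-- The transformation `[0,1] → [0,1]` sending a Łukasiewicz value to a product value. -/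
noncomputable def fLuk : ℝ → ℝ := fun u => max 0 (1 + Real.log (max u (Real.exp (-1))))

/-- The transformation `[0,1] → [0,1]` sending a product value to a Łukasiewicz value. -/
noncomputable def gProd : ℝ → ℝ := fun u => Real.exp (u - 1)

lemma expneg_pos : (0:ℝ) < Real.exp (-1) := Real.exp_pos _

lemma fLuk_mono : Monotone fLuk := by
  intro u v huv
  apply max_le_max le_rfl
  have h : Real.log (max u (Real.exp (-1))) ≤ Real.log (max v (Real.exp (-1))) :=
    Real.log_le_log (lt_max_of_lt_right expneg_pos) (max_le_max huv le_rfl)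
  linarith

lemma fLuk_cont : Continuous fLuk := by
  have h : Continuous fun u : ℝ => Real.log (max u (Real.exp (-1))) := by
    refine continuous_iff_continuousAt.2 fun u => ?_
    exact ContinuousAt.log ((continuous_id'.max continuous_const).continuousAt)
      (ne_of_gt (lt_max_of_lt_right expneg_pos))
  exact continuous_const.max (continuous_const.add h)

lemma fLuk_zero : fLuk 0 = 0 := by
  simp [fLuk, max_eq_right expneg_pos.le, Real.log_exp]

lemma fLuk_one : fLuk 1 = 1 := by
  have h1 : Real.exp (-1) ≤ 1 := by
    rw [show (1:ℝ) = Real.exp 0 by simp]; exact Real.exp_le_exp.2 (by norm_num)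
  simp [fLuk, max_eq_left h1]

lemma fLuk_nonneg (u : ℝ) : 0 ≤ fLuk u := le_max_left _ _

lemma fLuk_le_one {u : ℝ} (hu : u ≤ 1) : fLuk u ≤ 1 := by
  have h1 : Real.exp (-1) ≤ 1 := by
    rw [show (1:ℝ) = Real.exp 0 by simp]; exact Real.exp_le_exp.2 (by norm_num)
  have : Real.log (max u (Real.exp (-1))) ≤ 0 := Real.log_nonpos (by positivity)
    (max_le hu h1)
  simp only [fLuk]
  refine max_le (by norm_num) (by linarith)

lemma fLuk_eq_one {u : ℝ} (hu0 : 0 ≤ u) (hu : u ≤ 1) : fLuk u = 1 ↔ u = 1 := by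
  have h1 : Real.exp (-1) ≤ 1 := by
    rw [show (1:ℝ) = Real.exp 0 by simp]; exact Real.exp_le_exp.2 (by norm_num)
  have hm : (0:ℝ) < max u (Real.exp (-1)) := lt_max_of_lt_right expneg_pos
  constructor
  · intro h
    have h' : max (0:ℝ) (1 + Real.log (max u (Real.exp (-1)))) = 1 := h
    have hA1 : 1 + Real.log (max u (Real.exp (-1))) = 1 := by
      rcases max_cases (0:ℝ) (1 + Real.log (max u (Real.exp (-1)))) with ⟨he, _⟩ | ⟨he, _⟩
      · rw [he] at h'; norm_num at h'
      · rw [he] at h'; exact h'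
    have hlog0 : Real.log (max u (Real.exp (-1))) = 0 := by linarith
    have hmax1 : max u (Real.exp (-1)) = 1 := by
      have h2 := Real.exp_log hm
      rw [hlog0, Real.exp_zero] at h2
      exact h2.symm
    have hclt : Real.exp (-1) < 1 := by
      rw [show (1:ℝ) = Real.exp 0 by simp]; exact Real.exp_lt_exp.2 (by norm_num)
    rcases le_or_gt u (Real.exp (-1)) with hle | hlt
    · rw [max_eq_right hle] at hmax1; linarith
    · rw [max_eq_left hlt.le] at hmax1; exact hmax1
  · intro h; rw [h]; exact fLuk_one

lemma fLuk_triangle {p q m : ℝ} (hp0 : 0 ≤ p) (hp1 : p ≤ 1) (hq0 : 0 ≤ q) (hq1 : q ≤ 1)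
    (hm : p * q ≤ m) : lukT (fLuk p) (fLuk q) ≤ fLuk m := by
  have key : fLuk p + fLuk q - 1 ≤ fLuk m ∨ fLuk p + fLuk q - 1 ≤ 0 := by
    rcases eq_or_lt_of_le (fLuk_nonneg p) with hfp | hfp
    · right; have := fLuk_le_one hq1; linarith
    rcases eq_or_lt_of_le (fLuk_nonneg q) with hfq | hfq
    · right; have := fLuk_le_one hp1; linarith
    · left
      have hc := expneg_pos
      -- positivity of fLuk p forces p > exp(-1)
      have hpg : Real.exp (-1) < p := by
        by_contra hcon
        push_neg at hcon
        have : max p (Real.exp (-1)) = Real.exp (-1) := max_eq_right hcon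
        simp [fLuk, this, Real.log_exp] at hfp
      have hqg : Real.exp (-1) < q := by
        by_contra hcon
        push_neg at hcon
        have : max q (Real.exp (-1)) = Real.exp (-1) := max_eq_right hcon
        simp [fLuk, this, Real.log_exp] at hfq
      have hpp : (0:ℝ) < p := lt_trans hc hpg
      have hqp : (0:ℝ) < q := lt_trans hc hqg
      have hfpe : fLuk p = 1 + Real.log p := by
        have h1 : max p (Real.exp (-1)) = p := max_eq_left hpg.le
        have h2 : (0:ℝ) ≤ 1 + Real.log p := by
          have := Real.log_le_log hc hpg.le
          rw [Real.log_exp] at this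
          linarith
        simp [fLuk, h1, max_eq_right h2]
      have hfqe : fLuk q = 1 + Real.log q := by
        have h1 : max q (Real.exp (-1)) = q := max_eq_left hqg.le
        have h2 : (0:ℝ) ≤ 1 + Real.log q := by
          have := Real.log_le_log hc hqg.le
          rw [Real.log_exp] at this
          linarith
        simp [fLuk, h1, max_eq_right h2]
      have hpq : (0:ℝ) < p * q := mul_pos hpp hqp
      have hmax : p * q ≤ max m (Real.exp (-1)) := le_trans hm (le_max_left _ _)
      have hlog : Real.log (p * q) ≤ Real.log (max m (Real.exp (-1))) :=
        Real.log_le_log hpq hmax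
      rw [Real.log_mul hpp.ne' hqp.ne'] at hlog
      have : 1 + Real.log p + Real.log q ≤ fLuk m := by
        have := le_max_right (0:ℝ) (1 + Real.log (max m (Real.exp (-1))))
        simp only [fLuk]
        refine le_trans ?_ this
        linarith
      rw [hfpe, hfqe]
      linarith
  rcases key with h | h
  · exact max_le (fLuk_nonneg m) (h)
  · simp only [lukT]
    rw [max_eq_left h]
    exact fLuk_nonneg m

lemma gProd_mono : Monotone gProd := fun u v h => Real.exp_le_exp.2 (by linarith)

lemma gProd_cont : Continuous gProd := Real.continuous_exp.comp (by continuity)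

lemma gProd_pos (u : ℝ) : 0 < gProd u := Real.exp_pos _

lemma gProd_one : gProd 1 = 1 := by simp [gProd]

lemma gProd_le_one {u : ℝ} (hu : u ≤ 1) : gProd u ≤ 1 := by
  rw [show (1:ℝ) = Real.exp 0 by simp]
  exact Real.exp_le_exp.2 (by linarith)

lemma gProd_eq_one {u : ℝ} : gProd u = 1 ↔ u = 1 := by
  rw [gProd, Real.exp_eq_one_iff]
  constructor <;> intro h <;> linarith

/-- Auxiliary: sSup of a nonempty image that is identically zero. -/
lemma sSup_image_zero {X : Type*} {A : Set X} (hA : A.Nonempty) {h : X → ℝ}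
    (hz : ∀ a ∈ A, h a = 0) : sSup (h '' A) = 0 := by
  have h1 : h '' A = {0} := by
    apply Set.eq_singleton_iff_nonempty_unique_mem.2
    exact ⟨hA.image h, by rintro _ ⟨a, ha, rfl⟩; exact hz a ha⟩
  rw [h1]
  exact csSup_singleton 0

/-- If `β` agrees with `g ∘ α` at nonzero times and vanishes at time `0`, then the induced
approach distances agree, provided `g` is monotone, continuous and detects `1`. -/
lemma probDist_transfer {X : Type*} (α β : X → X → ℝ≥0∞ → ℝ) (g : ℝ → ℝ)
    (hg_mono : Monotone g) (hg_cont : Continuous g)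
    (hg1 : ∀ u, 0 ≤ u → u ≤ 1 → (g u = 1 ↔ u = 1))
    (hαmem : ∀ x y t, α x y t ∈ Set.Icc (0:ℝ) 1)
    (hα0 : ∀ x y, α x y 0 = 0)
    (hβ : ∀ x y t, t ≠ 0 → β x y t = g (α x y t))
    (hβ0 : ∀ x y, β x y 0 = 0) :
    ∀ x A, probDist β x A = probDist α x A := by
  intro x A
  unfold probDist
  congr 1
  ext r
  simp only [Set.mem_setOf_eq]
  rcases A.eq_empty_or_nonempty with rfl | hA
  · simp [Real.sSup_empty]
  rcases eq_or_ne r 0 with rfl | hr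
  · rw [sSup_image_zero hA (fun a _ => hβ0 x a), sSup_image_zero hA (fun a _ => hα0 x a)]
  · have himg : (fun a => β x a r) '' A = g '' ((fun a => α x a r) '' A) := by
      rw [Set.image_image]
      exact Set.image_congr fun a _ => hβ x a r hr
    set S : Set ℝ := (fun a => α x a r) '' A with hS
    have hSne : S.Nonempty := hA.image _
    have hSbdd : BddAbove S := by
      refine ⟨1, ?_⟩
      rintro _ ⟨a, _, rfl⟩
      exact (hαmem x a r).2
    have hmap : sSup (g '' S) = g (sSup S) :=
      (hg_mono.map_csSup_of_continuousAt (hg_cont.continuousAt) hSne hSbdd).symm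
    have hS0 : 0 ≤ sSup S := by
      obtain ⟨a, ha⟩ := hA
      exact le_trans (hαmem x a r).1 (le_csSup hSbdd ⟨a, ha, rfl⟩)
    have hS1 : sSup S ≤ 1 := csSup_le hSne (by rintro _ ⟨a, _, rfl⟩; exact (hαmem x a r).2)
    rw [himg, hmap]
    exact hg1 _ hS0 hS1

lemma luk_of_prod {X : Type*} {α : X → X → ℝ≥0∞ → ℝ} (hα : IsProbMetric prodT α) :
    ∃ β : X → X → ℝ≥0∞ → ℝ, IsProbMetric lukT β ∧ ∀ x A, probDist β x A = probDist α x A := by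
  refine ⟨fun x y t => fLuk (α x y t), ⟨?_, ?_, ?_, ?_, ?_⟩, ?_⟩
  · intro x y
    obtain ⟨hmem, hzero, htop, hmono, hlc⟩ := hα.dd x y
    refine ⟨fun t => ⟨fLuk_nonneg _, fLuk_le_one (hmem t).2⟩, by rw [hzero]; exact fLuk_zero,
      by rw [htop]; exact fLuk_one, fun s t hst => fLuk_mono (hmono hst), ?_⟩
    intro t ht htop'
    have : Nonempty {s : ℝ≥0∞ // s < t} := ⟨⟨0, ht⟩⟩
    rw [hlc t ht htop']
    exact fLuk_mono.map_ciSup_of_continuousAt fLuk_cont.continuousAt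
      ⟨1, by rintro _ ⟨s, rfl⟩; exact (hmem s.1).2⟩
  · intro x t ht
    rw [hα.refl x t ht]; exact fLuk_one
  · intro x y t; rw [hα.symm x y t]
  · intro x y h
    refine hα.sep x y fun t ht => ?_
    have := h t ht
    exact (fLuk_eq_one ((hα.dd x y).mem t).1 ((hα.dd x y).mem t).2).1 this
  · intro x y z r s
    exact fLuk_triangle ((hα.dd y z).mem r).1 ((hα.dd y z).mem r).2
      ((hα.dd x y).mem s).1 ((hα.dd x y).mem s).2 (hα.triangle x y z r s)
  · exact probDist_transfer α _ fLuk fLuk_mono fLuk_cont (fun u h0 h1 => fLuk_eq_one h0 h1)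
      (fun x y t => (hα.dd x y).mem t) (fun x y => (hα.dd x y).zero)
      (fun x y t _ => rfl) (fun x y => by rw [(hα.dd x y).zero]; exact fLuk_zero)

lemma prod_of_luk {X : Type*} {α : X → X → ℝ≥0∞ → ℝ} (hα : IsProbMetric lukT α) :
    ∃ β : X → X → ℝ≥0∞ → ℝ, IsProbMetric prodT β ∧ ∀ x A, probDist β x A = probDist α x A := by
  set β : X → X → ℝ≥0∞ → ℝ := fun x y t => if t = 0 then 0 else gProd (α x y t) with hβdef
  have hβ0 : ∀ x y, β x y 0 = 0 := fun x y => if_pos rfl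
  have hβt : ∀ x y (t : ℝ≥0∞), t ≠ 0 → β x y t = gProd (α x y t) := fun x y t ht => if_neg ht
  have hβnonneg : ∀ x y t, 0 ≤ β x y t := by
    intro x y t
    rcases eq_or_ne t 0 with rfl | ht
    · rw [hβ0]
    · rw [hβt x y t ht]; exact (gProd_pos _).le
  have hβle1 : ∀ x y t, β x y t ≤ 1 := by
    intro x y t
    rcases eq_or_ne t 0 with rfl | ht
    · rw [hβ0]; norm_num
    · rw [hβt x y t ht]; exact gProd_le_one ((hα.dd x y).mem t).2
  have hβmono : ∀ x y, Monotone (β x y) := by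
    intro x y s t hst
    rcases eq_or_ne s 0 with rfl | hs
    · rw [hβ0]; exact hβnonneg x y t
    · have ht : t ≠ 0 := fun h => hs (le_antisymm (h ▸ hst) (zero_le : (0:ℝ≥0∞) ≤ s))
      rw [hβt x y s hs, hβt x y t ht]
      exact gProd_mono ((hα.dd x y).mono hst)
  refine ⟨β, ⟨?_, ?_, ?_, ?_, ?_⟩, ?_⟩
  · intro x y
    obtain ⟨hmem, hzero, htop, hmono, hlc⟩ := hα.dd x y
    refine ⟨fun t => ⟨hβnonneg x y t, hβle1 x y t⟩, hβ0 x y,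
      by rw [hβt x y ⊤ (by simp), htop]; exact gProd_one, hβmono x y, ?_⟩
    intro t ht htop'
    have : Nonempty {s : ℝ≥0∞ // s < t} := ⟨⟨0, ht⟩⟩
    have hgsup : gProd (α x y t) = ⨆ s : {s : ℝ≥0∞ // s < t}, gProd (α x y s.1) := by
      rw [hlc t ht htop']
      exact gProd_mono.map_ciSup_of_continuousAt gProd_cont.continuousAt
        ⟨1, by rintro _ ⟨s, rfl⟩; exact (hmem s.1).2⟩
    have hbddg : BddAbove (Set.range fun s : {s : ℝ≥0∞ // s < t} => gProd (α x y s.1)) :=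
      ⟨1, by rintro _ ⟨s, rfl⟩; exact gProd_le_one (hmem s.1).2⟩
    have hbddβ : BddAbove (Set.range fun s : {s : ℝ≥0∞ // s < t} => β x y s.1) :=
      ⟨1, by rintro _ ⟨s, rfl⟩; exact hβle1 x y s.1⟩
    have hsup_eq : (⨆ s : {s : ℝ≥0∞ // s < t}, β x y s.1)
        = ⨆ s : {s : ℝ≥0∞ // s < t}, gProd (α x y s.1) := by
      apply le_antisymm
      · refine ciSup_mono hbddg fun s => ?_
        rcases eq_or_ne s.1 0 with h0 | h0
        · rw [h0, hβ0]; exact (gProd_pos _).le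
        · rw [hβt x y s.1 h0]
      · refine ciSup_le fun s => ?_
        rcases eq_or_ne s.1 0 with h0 | h0
        · -- use t/2 as a positive witness
          have ht2lt : t / 2 < t := ENNReal.half_lt_self ht.ne' htop'
          have ht2ne : t / 2 ≠ 0 := by
            simp [ENNReal.div_eq_zero_iff, ht.ne']
          have : gProd (α x y s.1) ≤ β x y (t / 2) := by
            rw [hβt x y _ ht2ne]
            exact gProd_mono (hmono (h0 ▸ (zero_le : (0:ℝ≥0∞) ≤ t / 2)))
          exact this.trans (le_ciSup hbddβ ⟨t / 2, ht2lt⟩)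
        · rw [← hβt x y s.1 h0]
          exact le_ciSup hbddβ s
    rw [hβt x y t ht.ne', hgsup, hsup_eq]
  · intro x t ht
    rw [hβt x x t ht.ne', hα.refl x t ht]; exact gProd_one
  · intro x y t
    rcases eq_or_ne t 0 with rfl | ht
    · rw [hβ0, hβ0]
    · rw [hβt x y t ht, hβt y x t ht, hα.symm x y t]
  · intro x y h
    refine hα.sep x y fun t ht => ?_
    have := h t ht
    rw [hβt x y t ht.ne'] at this
    exact gProd_eq_one.1 this
  · intro x y z r s
    rcases eq_or_ne r 0 with rfl | hr
    · simp only [prodT, hβ0, zero_mul]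
      exact hβnonneg x z _
    rcases eq_or_ne s 0 with rfl | hs
    · simp only [prodT, hβ0, mul_zero]
      exact hβnonneg x z _
    · have hrs : r + s ≠ 0 := by simp [hr, hs]
      rw [hβt y z r hr, hβt x y s hs, hβt x z _ hrs]
      simp only [prodT, gProd, ← Real.exp_add]
      apply Real.exp_le_exp.2
      have htri := hα.triangle x y z r s
      simp only [lukT] at htri
      have := le_trans (le_max_right 0 (α y z r + α x y s - 1)) htri
      linarith
  · exact probDist_transfer α β gProd gProd_mono gProd_cont (fun u _ _ => gProd_eq_one)
      (fun x y t => (hα.dd x y).mem t) (fun x y => (hα.dd x y).zero) hβt hβ0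

end Aux

theorem stmt10 {X : Type*} (δ : X → Set X → ℝ≥0∞) (hδ : IsApproach δ) :
    ProbMetrizable prodT δ ↔ ProbMetrizable lukT δ := by
  constructor
  · rintro ⟨α, hα, hδα⟩
    obtain ⟨β, hβ, hβα⟩ := luk_of_prod hα
    exact ⟨β, hβ, fun x A => (hδα x A).trans (hβα x A).symm⟩
  · rintro ⟨α, hα, hδα⟩
    obtain ⟨β, hβ, hβα⟩ := prod_of_luk hα
    exact ⟨β, hβ, fun x A => (hδα x A).trans (hβα x A).symm⟩
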